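/- Let n ≥ 1 and ℓ, h ∈ [0,1] with ℓ < 1/n < h, and set k = ⌊(1 − n·ℓ)/(h − ℓ)⌋ and f = 1 − k·h − (n − k − 1)·ℓ. Then ℓ ≤ f ≤ h, and every extreme point of I(ℓ,h) = {p : Fin n → ℝ | (∀ i, ℓ ≤ p i ∧ p i ≤ h) ∧ ∑ i, p i = 1} is a permutation of the vector (h, …, h, ℓ, …, ℓ, f) having k entries equal to h, n − k − 1 entries equal to ℓ, and one entry equal to f. -/

import Mathlib

lemma helper_rep {α β : Type*} (s : Finset α) (v : α → β) (c : β)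
    (hc : ∀ i ∈ s, v i = c) :
    Multiset.map v s.val = Multiset.replicate s.card c := by
  rw [Multiset.eq_replicate]
  refine ⟨by rw [Multiset.card_map]; rfl, ?_⟩
  intro b hb
  obtain ⟨i, hi, rfl⟩ := Multiset.mem_map.1 hb
  exact hc i hi

lemma helper_perm {n : ℕ} (f g : Fin n → ℝ)
    (hfg : Multiset.map f Finset.univ.val = Multiset.map g Finset.univ.val) :
    ∃ σ : Equiv.Perm (Fin n), f ∘ σ = g := by
  have hperm : (List.ofFn f).Perm (List.ofFn g) := by
    rw [← Multiset.coe_eq_coe]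
    simpa [Fin.univ_def, Multiset.map_coe, List.ofFn_eq_map] using hfg
  have h1 : (List.ofFn (f ∘ Tuple.sort f)).Perm (List.ofFn (g ∘ Tuple.sort g)) :=
    (((Tuple.sort f).ofFn_comp_perm f).trans hperm).trans
      ((Tuple.sort g).ofFn_comp_perm g).symm
  have h2 := h1.eq_of_sortedLE
    (Tuple.monotone_sort f).sortedLE_ofFn (Tuple.monotone_sort g).sortedLE_ofFn
  have heq : f ∘ Tuple.sort f = g ∘ Tuple.sort g := List.ofFn_injective h2
  refine ⟨(Tuple.sort g).symm.trans (Tuple.sort f), funext fun x => ?_⟩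
  have := congrFun heq ((Tuple.sort g).symm x)
  simpa using this

lemma helper_free {n : ℕ} (ℓ h : ℝ) (v : Fin n → ℝ)
    (hv : v ∈ Set.extremePoints ℝ
      {p : Fin n → ℝ | (∀ i, ℓ ≤ p i ∧ p i ≤ h) ∧ ∑ i, p i = 1})
    (i j : Fin n) (hij : i ≠ j)
    (hi1 : ℓ < v i) (hi2 : v i < h) (hj1 : ℓ < v j) (hj2 : v j < h) : False := by
  obtain ⟨hvS, hext⟩ := hv
  set ε : ℝ := min (min (h - v i) (v i - ℓ)) (min (h - v j) (v j - ℓ)) with hε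
  have hε0 : 0 < ε := by
    simp only [hε, lt_min_iff]; refine ⟨⟨?_, ?_⟩, ?_, ?_⟩ <;> linarith
  have he1 : ε ≤ h - v i := le_trans (min_le_left _ _) (min_le_left _ _)
  have he2 : ε ≤ v i - ℓ := le_trans (min_le_left _ _) (min_le_right _ _)
  have he3 : ε ≤ h - v j := le_trans (min_le_right _ _) (min_le_left _ _)
  have he4 : ε ≤ v j - ℓ := le_trans (min_le_right _ _) (min_le_right _ _)
  set d : Fin n → ℝ := fun t => (if t = i then ε else 0) + (if t = j then -ε else 0) with hd
  have hdsum : ∑ t, d t = 0 := by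
    simp only [hd, Finset.sum_add_distrib, Finset.sum_ite_eq', Finset.mem_univ, if_true]
    ring
  have hdi : d i = ε := by simp [hd, hij]
  have hdj : d j = -ε := by simp [hd, hij.symm]
  have hdo : ∀ t, t ≠ i → t ≠ j → d t = 0 := by intro t h1 h2; simp [hd, h1, h2]
  have hbound : ∀ t, ℓ ≤ v t + d t ∧ v t + d t ≤ h := by
    intro t
    rcases eq_or_ne t i with rfl | hti
    · rw [hdi]; constructor <;> linarith
    · rcases eq_or_ne t j with rfl | htj
      · rw [hdj]; constructor <;> linarith
      · rw [hdo t hti htj]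
        have := hvS.1 t
        constructor <;> linarith [this.1, this.2]
  have hbound' : ∀ t, ℓ ≤ v t - d t ∧ v t - d t ≤ h := by
    intro t
    rcases eq_or_ne t i with rfl | hti
    · rw [hdi]; constructor <;> linarith
    · rcases eq_or_ne t j with rfl | htj
      · rw [hdj]; constructor <;> linarith
      · rw [hdo t hti htj]
        have := hvS.1 t
        constructor <;> linarith [this.1, this.2]
  have hx1 : (v + d) ∈ {p : Fin n → ℝ | (∀ i, ℓ ≤ p i ∧ p i ≤ h) ∧ ∑ i, p i = 1} := by
    refine ⟨fun t => hbound t, ?_⟩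
    simp only [Pi.add_apply, Finset.sum_add_distrib, hdsum, hvS.2]
    ring
  have hx2 : (v - d) ∈ {p : Fin n → ℝ | (∀ i, ℓ ≤ p i ∧ p i ≤ h) ∧ ∑ i, p i = 1} := by
    refine ⟨fun t => hbound' t, ?_⟩
    simp only [Pi.sub_apply, Finset.sum_sub_distrib, hdsum, hvS.2]
    ring
  have hmem : v ∈ openSegment ℝ (v + d) (v - d) := by
    refine ⟨1/2, 1/2, by norm_num, by norm_num, by norm_num, ?_⟩
    funext t
    simp only [Pi.add_apply, Pi.sub_apply, Pi.smul_apply, smul_eq_mul]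
    ring
  have h1 := hext hx1 hx2 hmem
  have h2 : (v + d) i = v i := by rw [h1]
  simp only [Pi.add_apply, hdi] at h2
  linarith

theorem stmt_3 (n : ℕ) (hn : 1 ≤ n) (ℓ h : ℝ)
    (hℓ0 : 0 ≤ ℓ) (hℓ1 : ℓ ≤ 1) (hh0 : 0 ≤ h) (hh1 : h ≤ 1)
    (hℓn : ℓ < 1 / n) (hhn : 1 / (n : ℝ) < h)
    (k : ℕ) (hk : k = ⌊(1 - n * ℓ) / (h - ℓ)⌋₊)
    (f : ℝ) (hf : f = 1 - k * h - ((n : ℝ) - k - 1) * ℓ) :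
    (ℓ ≤ f ∧ f ≤ h) ∧
    ∀ v ∈ Set.extremePoints ℝ
        {p : Fin n → ℝ | (∀ i, ℓ ≤ p i ∧ p i ≤ h) ∧ ∑ i, p i = 1},
      ∃ σ : Equiv.Perm (Fin n),
        v ∘ σ = fun i : Fin n =>
          if (i : ℕ) < k then h else if (i : ℕ) < n - 1 then ℓ else f := by

  classical
  have hn0 : (0:ℝ) < n := by exact_mod_cast Nat.pos_of_ne_zero (by omega)
  have hd : 0 < h - ℓ := by have : ℓ < h := hℓn.trans hhn; linarith
  have hnl : (n:ℝ) * ℓ < 1 := by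
    have := mul_lt_mul_of_pos_left hℓn hn0
    rwa [mul_one_div, div_self hn0.ne'] at this
  have hnh : 1 < (n:ℝ) * h := by
    have := mul_lt_mul_of_pos_left hhn hn0
    rwa [mul_one_div, div_self hn0.ne'] at this
  have hr0 : 0 ≤ (1 - n * ℓ) / (h - ℓ) := div_nonneg (by linarith) hd.le
  have hk1 : (k:ℝ) * (h - ℓ) ≤ 1 - n * ℓ := by
    have := Nat.floor_le hr0
    rw [← hk] at this
    exact (le_div_iff₀ hd).1 this
  have hk2 : 1 - (n:ℝ) * ℓ < ((k:ℝ) + 1) * (h - ℓ) := by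
    have := Nat.lt_floor_add_one ((1 - n * ℓ) / (h - ℓ))
    rw [← hk] at this
    have := (div_lt_iff₀ hd).1 this
    push_cast at this ⊢
    linarith
  have hkn : k < n := by
    have h1 : (1 - (n:ℝ) * ℓ) / (h - ℓ) < n := by
      rw [div_lt_iff₀ hd]; nlinarith
    have := (Nat.floor_lt hr0).2 h1
    rw [← hk] at this; exact this
  refine ⟨⟨by nlinarith, by nlinarith⟩, ?_⟩
  intro v hv
  obtain ⟨hbd, hsum⟩ := hv.1
  set A : Finset (Fin n) := Finset.univ.filter (fun i => v i = h) with hA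
  set B : Finset (Fin n) := Finset.univ.filter (fun i => v i = ℓ) with hB
  set C : Finset (Fin n) := Finset.univ.filter (fun i => ℓ < v i ∧ v i < h) with hC
  have hAB : Disjoint A B := by
    rw [Finset.disjoint_left]
    intro a ha hb
    simp only [hA, hB, Finset.mem_filter, Finset.mem_univ, true_and] at ha hb
    rw [ha] at hb; linarith
  have hABC : Disjoint (A.disjUnion B hAB) C := by
    rw [Finset.disjoint_left]
    intro a ha hc
    simp only [hA, hB, hC, Finset.mem_disjUnion, Finset.mem_filter, Finset.mem_univ,
      true_and] at ha hc
    rcases ha with ha | ha <;> rw [ha] at hc <;> linarith [hc.1, hc.2]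
  have huniv : (A.disjUnion B hAB).disjUnion C hABC = Finset.univ := by
    ext t
    simp only [hA, hB, hC, Finset.mem_disjUnion, Finset.mem_filter, Finset.mem_univ,
      true_and, iff_true]
    rcases (hbd t).2.lt_or_eq with h1 | h1
    · rcases (hbd t).1.lt_or_eq with h2 | h2
      · exact Or.inr ⟨h2, h1⟩
      · exact Or.inl (Or.inr h2.symm)
    · exact Or.inl (Or.inl h1)
  have hcard : A.card + B.card + C.card = n := by
    have := congrArg Finset.card huniv
    rwa [Finset.card_disjUnion, Finset.card_disjUnion, Finset.card_univ,
      Fintype.card_fin] at this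
  have hsumA : ∑ t ∈ A, v t = (A.card : ℝ) * h := by
    rw [Finset.sum_congr rfl (fun t ht => by
      simp only [hA, Finset.mem_filter] at ht; exact ht.2), Finset.sum_const, nsmul_eq_mul]
  have hsumB : ∑ t ∈ B, v t = (B.card : ℝ) * ℓ := by
    rw [Finset.sum_congr rfl (fun t ht => by
      simp only [hB, Finset.mem_filter] at ht; exact ht.2), Finset.sum_const, nsmul_eq_mul]
  have hsum' : (A.card : ℝ) * h + (B.card : ℝ) * ℓ + ∑ t ∈ C, v t = 1 := by
    rw [← hsumA, ← hsumB, ← Finset.sum_disjUnion hAB, ← Finset.sum_disjUnion hABC, huniv]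
    exact hsum
  have hCcard : C.card ≤ 1 := by
    rw [Finset.card_le_one]
    intro a ha b hb
    by_contra hne
    simp only [hC, Finset.mem_filter, Finset.mem_univ, true_and] at ha hb
    exact helper_free ℓ h v hv a b hne ha.1 ha.2 hb.1 hb.2
  have hmv : Multiset.map v Finset.univ.val
      = Multiset.replicate A.card h + Multiset.replicate B.card ℓ + Multiset.map v C.val := by
    rw [← huniv]
    show Multiset.map v (A.val + B.val + C.val) = _
    rw [Multiset.map_add, Multiset.map_add,
      helper_rep A v h (fun i hi => by
        simpa [hA, Finset.mem_filter] using hi),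
      helper_rep B v ℓ (fun i hi => by
        simpa [hB, Finset.mem_filter] using hi)]
  set w : Fin n → ℝ := fun i : Fin n =>
    if (i : ℕ) < k then h else if (i : ℕ) < n - 1 then ℓ else f with hw
  -- multiset of w
  set P : Finset (Fin n) := Finset.univ.filter (fun i : Fin n => (i : ℕ) < k) with hPdef
  set Q : Finset (Fin n) :=
    Finset.univ.filter (fun i : Fin n => ¬ (i : ℕ) < k ∧ (i : ℕ) < n - 1) with hQdef
  set R : Finset (Fin n) :=
    Finset.univ.filter (fun i : Fin n => ¬ (i : ℕ) < k ∧ ¬ (i : ℕ) < n - 1) with hRdef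
  have hP : P.card = k := by
    have : P = Finset.Iio (⟨k, hkn⟩ : Fin n) := by
      ext t; simp [hPdef, Fin.lt_def]
    rw [this, Fin.card_Iio]
  have hQ : Q.card = n - 1 - k := by
    have hsub : Finset.Iio (⟨k, hkn⟩ : Fin n) ⊆ Finset.Iio (⟨n - 1, by omega⟩ : Fin n) := by
      intro t ht
      simp only [Finset.mem_Iio, Fin.lt_def] at ht ⊢
      omega
    have : Q = Finset.Iio (⟨n - 1, by omega⟩ : Fin n) \ Finset.Iio (⟨k, hkn⟩ : Fin n) := by
      ext t
      simp only [hQdef, Finset.mem_filter, Finset.mem_univ, true_and, Finset.mem_sdiff,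
        Finset.mem_Iio, Fin.lt_def]
      omega
    rw [this, Finset.card_sdiff_of_subset hsub, Fin.card_Iio, Fin.card_Iio]
  have hR : R = {(⟨n - 1, by omega⟩ : Fin n)} := by
    ext t
    simp only [hRdef, Finset.mem_filter, Finset.mem_univ, true_and, Finset.mem_singleton,
      Fin.ext_iff]
    have := t.isLt
    omega
  have hPQ : Disjoint P Q := by
    rw [Finset.disjoint_left]
    intro a ha hb
    simp only [hPdef, hQdef, Finset.mem_filter, Finset.mem_univ, true_and] at ha hb
    omega
  have hPQR : Disjoint (P.disjUnion Q hPQ) R := by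
    rw [Finset.disjoint_left]
    intro a ha hb
    simp only [hPdef, hQdef, hRdef, Finset.mem_disjUnion, Finset.mem_filter,
      Finset.mem_univ, true_and] at ha hb
    omega
  have hunivw : (P.disjUnion Q hPQ).disjUnion R hPQR = Finset.univ := by
    ext t
    simp only [hPdef, hQdef, hRdef, Finset.mem_disjUnion, Finset.mem_filter,
      Finset.mem_univ, true_and, iff_true]
    omega
  have hmw : Multiset.map w Finset.univ.val
      = Multiset.replicate k h + Multiset.replicate (n - 1 - k) ℓ
        + Multiset.replicate 1 f := by
    rw [← hunivw]
    show Multiset.map w (P.val + Q.val + R.val) = _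
    rw [Multiset.map_add, Multiset.map_add,
      helper_rep P w h (fun i hi => by
        simp only [hPdef, Finset.mem_filter, Finset.mem_univ, true_and] at hi
        simp only [hw, if_pos hi]),
      helper_rep Q w ℓ (fun i hi => by
        simp only [hQdef, Finset.mem_filter, Finset.mem_univ, true_and] at hi
        simp only [hw, if_neg hi.1, if_pos hi.2]),
      helper_rep R w f (fun i hi => by
        simp only [hRdef, Finset.mem_filter, Finset.mem_univ, true_and] at hi
        simp only [hw, if_neg hi.1, if_neg hi.2]),
      hP, hQ, hR, Finset.card_singleton]
  rcases C.eq_empty_or_nonempty with hCe | ⟨j, hj⟩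
  · -- no free coordinate
    have hcard' : A.card + B.card = n := by rw [hCe] at hcard; simpa using hcard
    have hsum'' : (A.card : ℝ) * h + (B.card : ℝ) * ℓ = 1 := by
      rw [hCe] at hsum'; simpa using hsum'
    have hcast : (A.card : ℝ) + (B.card : ℝ) = n := by exact_mod_cast hcard'
    have hcl : ((A.card : ℝ) + (B.card : ℝ)) * ℓ = n * ℓ := by rw [hcast]
    have hAeq : (A.card : ℝ) * (h - ℓ) = 1 - n * ℓ := by
      ring_nf
      ring_nf at hcl hsum''
      linarith
    have hAk : A.card = k := by
      have hdiv : (1 - (n:ℝ) * ℓ) / (h - ℓ) = (A.card : ℝ) := by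
        rw [div_eq_iff hd.ne']; linarith
      rw [hk, hdiv, Nat.floor_natCast]
    have hkc : (k : ℝ) = A.card := by exact_mod_cast hAk.symm
    have hfl : f = ℓ := by rw [hf, hkc]; linear_combination -hAeq
    have hBk : B.card = n - k := by omega
    refine helper_perm v w ?_
    rw [hmv, hmw, hCe, hfl]
    show _ + Multiset.map v (0 : Multiset (Fin n)) = _
    rw [Multiset.map_zero, add_zero, hAk, hBk, add_assoc, ← Multiset.replicate_add]
    congr 2
    omega
  · -- one free coordinate j
    have hCj : C = {j} := by
      refine Finset.eq_singleton_iff_unique_mem.2 ⟨hj, fun b hb => ?_⟩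
      exact Finset.card_le_one.1 hCcard b hb j hj
    have hjf : ℓ < v j ∧ v j < h := by
      simpa [hC, Finset.mem_filter] using hj
    have hcard' : A.card + B.card + 1 = n := by rw [hCj] at hcard; simpa using hcard
    have hsum'' : (A.card : ℝ) * h + (B.card : ℝ) * ℓ + v j = 1 := by
      rw [hCj] at hsum'; simpa using hsum'
    have hcast : (A.card : ℝ) + (B.card : ℝ) + 1 = n := by exact_mod_cast hcard'
    have hcl : ((A.card : ℝ) + (B.card : ℝ) + 1) * ℓ = n * ℓ := by rw [hcast]
    have hch : ((A.card : ℝ) + (B.card : ℝ) + 1) * h = n * h := by rw [hcast]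
    have hA1 : (A.card : ℝ) * (h - ℓ) < 1 - n * ℓ := by
      have := hjf.1
      ring_nf
      ring_nf at hcl hsum''
      linarith
    have hA2 : 1 - (n:ℝ) * ℓ < ((A.card : ℝ) + 1) * (h - ℓ) := by
      have := hjf.2
      ring_nf
      ring_nf at hcl hsum''
      linarith
    have hAk : A.card = k := by
      have hle : A.card ≤ k := by
        rw [hk]
        exact Nat.le_floor ((le_div_iff₀ hd).2 hA1.le)
      have hge : k ≤ A.card := by
        have hA2' : 1 - (n:ℝ) * ℓ < ((A.card + 1 : ℕ) : ℝ) * (h - ℓ) := by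
          push_cast; linarith
        have := (Nat.floor_lt hr0).2 ((div_lt_iff₀ hd).2 hA2')
        rw [← hk] at this
        omega
      omega
    have hkc : (k : ℝ) = A.card := by exact_mod_cast hAk.symm
    have hvjf : v j = f := by
      rw [hf, hkc]; linear_combination hsum'' - ℓ * hcast
    have hBk : B.card = n - 1 - k := by omega
    refine helper_perm v w ?_
    rw [hmv, hmw, hCj, hAk, hBk]
    congr 1
    show Multiset.map v ({j} : Finset (Fin n)).val = _
    rw [Finset.singleton_val, Multiset.map_singleton, hvjf, Multiset.replicate_one]
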